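/- Let a = P(R1=1) and b = P(R0=1) with 0 < a ≤ 1 and 0 ≤ b ≤ 1, and let x = P(R0=0, R1=1) be the cell of a 2x2 joint distribution with these margins. Then the probability of causation PC = x/a satisfies max{0, 1 − b/a} ≤ PC ≤ min{1, (1−b)/a}. -/

import Mathlib

/-- General interval bounds for the probability of causation PC = x/a where
x = P(R0=0,R1=1), a = P(R1=1), b = P(R0=1). -/
theorem stmt_1 (p00 p01 p10 p11 a b : ℝ)
    (h00 : 0 ≤ p00) (h01 : 0 ≤ p01) (h10 : 0 ≤ p10) (h11 : 0 ≤ p11)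
    (hsum : p00 + p01 + p10 + p11 = 1)
    (ha : p10 + p11 = a) (hb : p01 + p11 = b)
    (ha0 : 0 < a) (ha1 : a ≤ 1) (hb0 : 0 ≤ b) (hb1 : b ≤ 1) :
    max 0 (1 - b / a) ≤ p10 / a ∧ p10 / a ≤ min 1 ((1 - b) / a) := by
  constructor
  · apply max_le
    · positivity
    · rw [sub_div' (ne_of_gt ha0), div_le_div_iff₀ ha0 ha0]
      nlinarith
  · apply le_min
    · rw [div_le_one ha0]; nlinarith
    · rw [div_le_div_iff₀ ha0 ha0]; nlinarith
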